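/- Fix integers m ≥ 1 and 1 ≤ k ≤ n, and set N = m·n. On the probability space Ω = (ℕ → Fin N) with the product μ of uniform measures, fix a subset F ⊆ Fin N with |F| = n, and let ν(ω) be the least t ≥ 1 such that |D_t(ω) ∩ F| ≥ k (ν is finite μ-almost surely). Then ν is integrable and its expectation satisfies ∫ ν dμ = m·n · (H_n − H_{n−k}). (This is the expected number of uniform samples needed to recover one file under the local MDS coding scheme C₁.) -/

import Mathlib

open MeasureTheory ProbabilityTheory Finset
open scoped ENNReal

/-- The `j`-th harmonic number `H_j = ∑_{i=1}^j 1/i`, as a real number. -/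
noncomputable def H (j : ℕ) : ℝ := ∑ i ∈ Finset.range j, (1 : ℝ) / (i + 1)

/-- The set `D_t(ω) = {ω 0, …, ω (t−1)}` of distinct values among the first `t` draws. -/
def D {N : ℕ} (t : ℕ) (ω : ℕ → Fin N) : Finset (Fin N) := (Finset.range t).image ω

/-- The first time `t ≥ 1` at which at least `k` of the drawn values lie in `F`. -/
noncomputable def recoveryTimeLocal {N : ℕ} (k : ℕ) (F : Finset (Fin N))
    (ω : ℕ → Fin N) : ℕ :=
  sInf {t | 1 ≤ t ∧ k ≤ (D t ω ∩ F).card}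

section Aux

variable {N : ℕ}

/-- Cylinder set prescribing the first `t` coordinates. -/
def cylF (t : ℕ) (f : Fin t → Fin N) : Set (ℕ → Fin N) :=
  {ω | ∀ i : Fin t, ω i = f i}

lemma D_eq_image (t : ℕ) (ω : ℕ → Fin N) :
    D t ω = Finset.image (fun i : Fin t => ω i) Finset.univ := by
  ext x
  simp only [D, Finset.mem_image, Finset.mem_range, Finset.mem_univ, true_and]
  constructor
  · rintro ⟨i, hi, rfl⟩; exact ⟨⟨i, hi⟩, rfl⟩
  · rintro ⟨i, rfl⟩; exact ⟨i, i.isLt, rfl⟩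

lemma setD_eq (t : ℕ) (B : Finset (Fin N)) :
    {ω : ℕ → Fin N | D t ω = B} =
      ⋃ f ∈ Finset.univ.filter
        (fun f : Fin t → Fin N => Finset.image f Finset.univ = B), cylF t f := by
  ext ω
  simp only [Set.mem_setOf_eq, Set.mem_iUnion, Finset.mem_filter, Finset.mem_univ, true_and,
    cylF, D_eq_image]
  constructor
  · intro h
    exact ⟨fun i : Fin t => ω i, ⟨h, fun i => rfl⟩⟩
  · rintro ⟨f, hf, hωf⟩
    rw [← hf]
    exact Finset.image_congr fun i _ => hωf i

lemma measurableSet_cylF (t : ℕ) (f : Fin t → Fin N) : MeasurableSet (cylF t f) := by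
  have : cylF t f = ⋂ i : Fin t, (fun ω : ℕ → Fin N => ω i) ⁻¹' {f i} := by
    ext ω; simp [cylF]
  rw [this]
  exact MeasurableSet.iInter fun i => (measurable_pi_apply (i : ℕ)) (measurableSet_singleton _)

lemma measurableSet_setD (t : ℕ) (B : Finset (Fin N)) :
    MeasurableSet {ω : ℕ → Fin N | D t ω = B} := by
  rw [setD_eq]
  exact (Finset.univ.filter _).measurableSet_biUnion fun f _ => measurableSet_cylF t f

lemma measurableSet_evalMem (t : ℕ) (S : Set (Fin N)) :
    MeasurableSet {ω : ℕ → Fin N | ω t ∈ S} :=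
  (measurable_pi_apply t) (MeasurableSet.of_discrete)

lemma measurableSet_DProp (t : ℕ) (P : Finset (Fin N) → Prop) :
    MeasurableSet {ω : ℕ → Fin N | P (D t ω)} := by
  classical
  have : {ω : ℕ → Fin N | P (D t ω)} =
      ⋃ B ∈ Finset.univ.filter (fun B : Finset (Fin N) => P B), {ω | D t ω = B} := by
    ext ω; simp
  rw [this]
  exact (Finset.univ.filter _).measurableSet_biUnion fun B _ => measurableSet_setD t B

end Aux

section Meas

variable {N : ℕ} {μ : Measure (ℕ → Fin N)} [IsProbabilityMeasure μ]

lemma meas_evalMem (hunif : ∀ t (x : Fin N), μ {ω | ω t = x} = ((N : ℕ) : ℝ≥0∞)⁻¹)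
    (t : ℕ) (S : Finset (Fin N)) :
    μ {ω : ℕ → Fin N | ω t ∈ S} = S.card * ((N : ℝ≥0∞))⁻¹ := by
  classical
  have hs : {ω : ℕ → Fin N | ω t ∈ S} = ⋃ x ∈ S, {ω | ω t = x} := by ext ω; simp
  rw [hs, measure_biUnion_finset]
  · simp only [hunif]
    rw [Finset.sum_const, nsmul_eq_mul]
  · intro x _ y _ hxy
    apply Set.disjoint_left.2
    intro ω hx hy
    exact hxy (hx.symm.trans hy)
  · intro x _
    show MeasurableSet ((fun ω : ℕ → Fin N => ω t) ⁻¹' {x})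
    exact measurable_pi_apply t (measurableSet_singleton x)

lemma meas_cylF_inter
    (hindep : iIndepFun (fun t (ω : ℕ → Fin N) => ω t) μ)
    (hunif : ∀ t (x : Fin N), μ {ω | ω t = x} = ((N : ℕ) : ℝ≥0∞)⁻¹)
    (t : ℕ) (f : Fin t → Fin N) (S : Finset (Fin N)) :
    μ (cylF t f ∩ {ω | ω t ∈ S}) = ((N : ℝ≥0∞)⁻¹) ^ t * (S.card * (N : ℝ≥0∞)⁻¹) := by
  classical
  set AA : ℕ → Finset (Fin N) := fun i => if h : i < t then {f ⟨i, h⟩} else S with hAA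
  have hset : cylF t f ∩ {ω : ℕ → Fin N | ω t ∈ S} =
      ⋂ i ∈ Finset.range (t + 1), {ω : ℕ → Fin N | ω i ∈ AA i} := by
    ext ω
    simp only [Set.mem_inter_iff, cylF, Set.mem_setOf_eq, Set.mem_iInter, Finset.mem_range]
    constructor
    · rintro ⟨h1, h2⟩ i hi
      by_cases h : i < t
      · simp only [hAA, h, dif_pos]
        simp [h1 ⟨i, h⟩]
      · have hit : i = t := by omega
        subst hit
        simp only [hAA, h, dif_neg]
        exact h2
    · intro h
      constructor
      · intro i
        have := h i (by omega)
        simpa only [hAA, i.isLt, dif_pos, Finset.mem_singleton] using this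
      · have := h t (by omega)
        simpa only [hAA, lt_irrefl, dif_neg, not_false_iff] using this
  rw [hset]
  rw [hindep.meas_biInter (S := Finset.range (t + 1))
    (s := fun i => {ω : ℕ → Fin N | ω i ∈ AA i})
    (fun i _ => ⟨(AA i : Set (Fin N)), .of_discrete, rfl⟩)]
  have hterm : ∀ i ∈ Finset.range (t + 1),
      μ {ω : ℕ → Fin N | ω i ∈ AA i} = (AA i).card * (N : ℝ≥0∞)⁻¹ := by
    intro i _
    exact meas_evalMem hunif i (AA i)
  rw [Finset.prod_congr rfl hterm, Finset.prod_range_succ]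
  have h1 : ∀ i ∈ Finset.range t, ((AA i).card : ℝ≥0∞) * (N : ℝ≥0∞)⁻¹ = (N : ℝ≥0∞)⁻¹ := by
    intro i hi
    simp [hAA, Finset.mem_range.1 hi]
  rw [Finset.prod_congr rfl h1, Finset.prod_const, Finset.card_range]
  simp [hAA]

lemma meas_cylF (hN : 0 < N)
    (hindep : iIndepFun (fun t (ω : ℕ → Fin N) => ω t) μ)
    (hunif : ∀ t (x : Fin N), μ {ω | ω t = x} = ((N : ℕ) : ℝ≥0∞)⁻¹)
    (t : ℕ) (f : Fin t → Fin N) :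
    μ (cylF t f) = ((N : ℝ≥0∞)⁻¹) ^ t := by
  have h := meas_cylF_inter hindep hunif t f Finset.univ
  have huniv : {ω : ℕ → Fin N | ω t ∈ (Finset.univ : Finset (Fin N))} = Set.univ := by
    ext ω; simp
  rw [huniv, Set.inter_univ] at h
  rw [h, Finset.card_univ, Fintype.card_fin,
    ENNReal.mul_inv_cancel (by exact_mod_cast hN.ne') (ENNReal.natCast_ne_top N), mul_one]

end Meas

section Meas2

set_option linter.unusedSectionVars false

variable {N : ℕ} {μ : Measure (ℕ → Fin N)} [IsProbabilityMeasure μ]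

lemma cylF_pairwiseDisjoint (t : ℕ) (G : Finset (Fin t → Fin N)) :
    (↑G : Set (Fin t → Fin N)).PairwiseDisjoint (cylF (N := N) t) := by
  intro f _ g _ hfg
  apply Set.disjoint_left.2
  intro ω hf hg
  exact hfg (funext fun i => (hf i).symm.trans (hg i))

lemma meas_setD_inter (hN : 0 < N)
    (hindep : iIndepFun (fun t (ω : ℕ → Fin N) => ω t) μ)
    (hunif : ∀ t (x : Fin N), μ {ω | ω t = x} = ((N : ℕ) : ℝ≥0∞)⁻¹)
    (t : ℕ) (B : Finset (Fin N)) (S : Finset (Fin N)) :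
    μ ({ω : ℕ → Fin N | D t ω = B} ∩ {ω | ω t ∈ S}) =
      μ {ω : ℕ → Fin N | D t ω = B} * (S.card * (N : ℝ≥0∞)⁻¹) := by
  classical
  set G := Finset.univ.filter
    (fun f : Fin t → Fin N => Finset.image f Finset.univ = B) with hG
  have h1 : {ω : ℕ → Fin N | D t ω = B} ∩ {ω | ω t ∈ S} =
      ⋃ f ∈ G, (cylF t f ∩ {ω | ω t ∈ S}) := by
    rw [setD_eq, Set.iUnion₂_inter]
  have hmS : MeasurableSet {ω : ℕ → Fin N | ω t ∈ S} := measurableSet_evalMem t _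
  rw [h1, measure_biUnion_finset
      ((cylF_pairwiseDisjoint t G).mono_on fun f _ => Set.inter_subset_left)
      (fun f _ => (measurableSet_cylF t f).inter hmS)]
  rw [setD_eq, measure_biUnion_finset (cylF_pairwiseDisjoint t G)
      (fun f _ => measurableSet_cylF t f)]
  rw [Finset.sum_mul]
  refine Finset.sum_congr rfl fun f _ => ?_
  rw [meas_cylF_inter hindep hunif t f S, meas_cylF hN hindep hunif t f]

lemma meas_DProp (t : ℕ) (P : Finset (Fin N) → Prop) [DecidablePred P] :
    μ {ω : ℕ → Fin N | P (D t ω)} =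
      ∑ B ∈ Finset.univ.filter P, μ {ω : ℕ → Fin N | D t ω = B} := by
  have h : {ω : ℕ → Fin N | P (D t ω)} =
      ⋃ B ∈ Finset.univ.filter P, {ω : ℕ → Fin N | D t ω = B} := by
    ext ω; simp
  rw [h, measure_biUnion_finset]
  · intro B _ C _ hBC
    apply Set.disjoint_left.2
    intro ω hB hC
    exact hBC (hB.symm.trans hC)
  · intro B _
    exact measurableSet_setD t B

lemma meas_card_succ (hN : 0 < N)
    (hindep : iIndepFun (fun t (ω : ℕ → Fin N) => ω t) μ)
    (hunif : ∀ t (x : Fin N), μ {ω | ω t = x} = ((N : ℕ) : ℝ≥0∞)⁻¹)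
    (F : Finset (Fin N)) (t j : ℕ) :
    μ {ω : ℕ → Fin N | (D (t + 1) ω ∩ F).card = j} =
      ∑ B : Finset (Fin N), μ {ω : ℕ → Fin N | D t ω = B} *
        ((Finset.univ.filter fun x : Fin N => ((insert x B) ∩ F).card = j).card
          * (N : ℝ≥0∞)⁻¹) := by
  classical
  have hD : ∀ ω : ℕ → Fin N, D (t + 1) ω = insert (ω t) (D t ω) := by
    intro ω
    simp [D, Finset.range_add_one]
  have hset : {ω : ℕ → Fin N | (D (t + 1) ω ∩ F).card = j} =
      ⋃ B ∈ (Finset.univ : Finset (Finset (Fin N))),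
        ({ω : ℕ → Fin N | D t ω = B} ∩
          {ω | ω t ∈ (Finset.univ.filter fun x : Fin N => ((insert x B) ∩ F).card = j)}) := by
    ext ω
    simp only [Set.mem_setOf_eq, Set.mem_iUnion, Finset.mem_univ, true_and,
      Set.mem_inter_iff, Finset.mem_filter]
    constructor
    · intro h
      exact ⟨D t ω, trivial, rfl, by rw [← hD ω]; exact h⟩
    · rintro ⟨B, -, rfl, h2⟩
      rw [hD ω]
      exact h2
  rw [hset, measure_biUnion_finset]
  · refine Finset.sum_congr rfl fun B _ => ?_
    exact meas_setD_inter hN hindep hunif t B _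
  · intro B _ C _ hBC
    apply Set.disjoint_left.2
    rintro ω ⟨hB, -⟩ ⟨hC, -⟩
    exact hBC (hB.symm.trans hC)
  · intro B _
    exact (measurableSet_setD t B).inter (measurableSet_evalMem t _)

end Meas2

section Comb

variable {N : ℕ}

lemma card_insert_inter (F B : Finset (Fin N)) (x : Fin N) :
    ((insert x B) ∩ F).card =
      if x ∈ F \ B then (B ∩ F).card + 1 else (B ∩ F).card := by
  classical
  by_cases hxF : x ∈ F
  · by_cases hxB : x ∈ B
    · have h : insert x B = B := Finset.insert_eq_self.2 hxB
      simp [h, Finset.mem_sdiff, hxF, hxB]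
    · rw [Finset.insert_inter_of_mem hxF,
        Finset.card_insert_of_notMem (by simp [hxB])]
      simp [Finset.mem_sdiff, hxF, hxB]
  · rw [Finset.insert_inter_of_notMem hxF]
    simp [Finset.mem_sdiff, hxF]

lemma card_sdiff_inter (F B : Finset (Fin N)) :
    (F \ B).card = F.card - (B ∩ F).card := by
  classical
  have h := Finset.card_sdiff_add_card_inter F B
  rw [Finset.inter_comm] at h
  omega

lemma card_filter_insert (F B : Finset (Fin N)) (j : ℕ) :
    (Finset.univ.filter fun x : Fin N => ((insert x B) ∩ F).card = j).card =
      if (B ∩ F).card = j then N - (F.card - (B ∩ F).card)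
      else if (B ∩ F).card + 1 = j then F.card - (B ∩ F).card else 0 := by
  classical
  have hre : (Finset.univ.filter fun x : Fin N => ((insert x B) ∩ F).card = j) =
      (Finset.univ.filter fun x : Fin N =>
        (if x ∈ F \ B then (B ∩ F).card + 1 else (B ∩ F).card) = j) := by
    apply Finset.filter_congr
    intro x _
    rw [card_insert_inter F B x]
  rw [hre]
  by_cases h1 : (B ∩ F).card = j
  · rw [if_pos h1]
    have : (Finset.univ.filter fun x : Fin N =>
        (if x ∈ F \ B then (B ∩ F).card + 1 else (B ∩ F).card) = j) = (F \ B)ᶜ := by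
      ext x
      simp only [Finset.mem_filter, Finset.mem_univ, true_and, Finset.mem_compl]
      by_cases hx : x ∈ F \ B
      · rw [if_pos hx]
        simp only [hx, not_true_eq_false, iff_false]
        omega
      · rw [if_neg hx]
        simp [hx, h1]
    rw [this, Finset.card_compl, card_sdiff_inter, Fintype.card_fin]
  · rw [if_neg h1]
    by_cases h2 : (B ∩ F).card + 1 = j
    · rw [if_pos h2]
      have : (Finset.univ.filter fun x : Fin N =>
          (if x ∈ F \ B then (B ∩ F).card + 1 else (B ∩ F).card) = j) = F \ B := by
        ext x
        simp only [Finset.mem_filter, Finset.mem_univ, true_and]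
        by_cases hx : x ∈ F \ B
        · rw [if_pos hx]
          simp [hx, h2]
        · rw [if_neg hx]
          simp only [hx, iff_false]
          omega
      rw [this, card_sdiff_inter]
    · rw [if_neg h2]
      have : (Finset.univ.filter fun x : Fin N =>
          (if x ∈ F \ B then (B ∩ F).card + 1 else (B ∩ F).card) = j) = ∅ := by
        ext x
        simp only [Finset.mem_filter, Finset.mem_univ, true_and, Finset.notMem_empty,
          iff_false]
        by_cases hx : x ∈ F \ B
        · rw [if_pos hx]; omega
        · rw [if_neg hx]; omega
      rw [this, Finset.card_empty]

end Comb

section PCard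

set_option linter.unusedSectionVars false

variable {N : ℕ} {μ : Measure (ℕ → Fin N)} [IsProbabilityMeasure μ]

noncomputable def pcard (μ : Measure (ℕ → Fin N)) (F : Finset (Fin N)) (t j : ℕ) : ℝ≥0∞ :=
  μ {ω : ℕ → Fin N | (D t ω ∩ F).card = j}

lemma pcard_zero_zero (F : Finset (Fin N)) : pcard μ F 0 0 = 1 := by
  have : {ω : ℕ → Fin N | (D 0 ω ∩ F).card = 0} = Set.univ := by
    ext ω; simp [D]
  rw [pcard, this, measure_univ]

lemma pcard_zero_succ (F : Finset (Fin N)) (j : ℕ) : pcard μ F 0 (j + 1) = 0 := by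
  have : {ω : ℕ → Fin N | (D 0 ω ∩ F).card = j + 1} = ∅ := by
    ext ω; simp [D]
  rw [pcard, this, measure_empty]

lemma pcard_succ_zero (hN : 0 < N)
    (hindep : iIndepFun (fun t (ω : ℕ → Fin N) => ω t) μ)
    (hunif : ∀ t (x : Fin N), μ {ω | ω t = x} = ((N : ℕ) : ℝ≥0∞)⁻¹)
    (F : Finset (Fin N)) (t : ℕ) :
    pcard μ F (t + 1) 0 = pcard μ F t 0 * (((N - F.card : ℕ) : ℝ≥0∞) * (N : ℝ≥0∞)⁻¹) := by
  classical
  rw [pcard, meas_card_succ hN hindep hunif F t 0]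
  have hterm : ∀ B : Finset (Fin N),
      μ {ω : ℕ → Fin N | D t ω = B} *
        ((Finset.univ.filter fun x : Fin N => ((insert x B) ∩ F).card = 0).card
          * (N : ℝ≥0∞)⁻¹) =
      if (B ∩ F).card = 0 then
        μ {ω : ℕ → Fin N | D t ω = B} * (((N - F.card : ℕ) : ℝ≥0∞) * (N : ℝ≥0∞)⁻¹)
      else 0 := by
    intro B
    rw [card_filter_insert]
    by_cases hB : (B ∩ F).card = 0
    · rw [if_pos hB, if_pos hB, hB, Nat.sub_zero]
    · rw [if_neg hB, if_neg hB, if_neg (by omega)]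
      simp
  rw [Finset.sum_congr rfl fun B _ => hterm B, ← Finset.sum_filter, ← Finset.sum_mul,
    ← meas_DProp (μ := μ) t (fun B => (B ∩ F).card = 0)]
  rfl

lemma pcard_succ_succ (hN : 0 < N)
    (hindep : iIndepFun (fun t (ω : ℕ → Fin N) => ω t) μ)
    (hunif : ∀ t (x : Fin N), μ {ω | ω t = x} = ((N : ℕ) : ℝ≥0∞)⁻¹)
    (F : Finset (Fin N)) (t j : ℕ) :
    pcard μ F (t + 1) (j + 1) =
      pcard μ F t (j + 1) * (((N - (F.card - (j + 1)) : ℕ) : ℝ≥0∞) * (N : ℝ≥0∞)⁻¹)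
        + pcard μ F t j * (((F.card - j : ℕ) : ℝ≥0∞) * (N : ℝ≥0∞)⁻¹) := by
  classical
  rw [pcard, meas_card_succ hN hindep hunif F t (j + 1)]
  have hterm : ∀ B : Finset (Fin N),
      μ {ω : ℕ → Fin N | D t ω = B} *
        ((Finset.univ.filter fun x : Fin N => ((insert x B) ∩ F).card = j + 1).card
          * (N : ℝ≥0∞)⁻¹) =
      (if (B ∩ F).card = j + 1 then
        μ {ω : ℕ → Fin N | D t ω = B} *
          (((N - (F.card - (j + 1)) : ℕ) : ℝ≥0∞) * (N : ℝ≥0∞)⁻¹) else 0)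
      + (if (B ∩ F).card = j then
        μ {ω : ℕ → Fin N | D t ω = B} *
          (((F.card - j : ℕ) : ℝ≥0∞) * (N : ℝ≥0∞)⁻¹) else 0) := by
    intro B
    rw [card_filter_insert]
    by_cases hB1 : (B ∩ F).card = j + 1
    · rw [if_pos hB1, if_pos hB1, if_neg (by omega), add_zero, hB1]
    · rw [if_neg hB1]
      by_cases hB2 : (B ∩ F).card = j
      · rw [if_pos (by omega), if_neg hB1, if_pos hB2, zero_add, hB2]
      · rw [if_neg (by omega), if_neg hB1, if_neg hB2]
        simp
  rw [Finset.sum_congr rfl fun B _ => hterm B, Finset.sum_add_distrib,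
    ← Finset.sum_filter, ← Finset.sum_filter, ← Finset.sum_mul, ← Finset.sum_mul,
    ← meas_DProp (μ := μ) t (fun B => (B ∩ F).card = j + 1),
    ← meas_DProp (μ := μ) t (fun B => (B ∩ F).card = j)]
  rfl

lemma meas_avoid
    (hindep : iIndepFun (fun t (ω : ℕ → Fin N) => ω t) μ)
    (hunif : ∀ t (x : Fin N), μ {ω | ω t = x} = ((N : ℕ) : ℝ≥0∞)⁻¹)
    (x : Fin N) (t : ℕ) :
    μ {ω : ℕ → Fin N | ∀ i < t, ω i ≠ x} = (1 - (N : ℝ≥0∞)⁻¹) ^ t := by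
  have hset : {ω : ℕ → Fin N | ∀ i < t, ω i ≠ x} =
      ⋂ i ∈ Finset.range t, (fun ω : ℕ → Fin N => ω i) ⁻¹' ({x}ᶜ : Set (Fin N)) := by
    ext ω
    simp [Set.mem_iInter]
  rw [hset, hindep.meas_biInter (S := Finset.range t)
    (s := fun i => (fun ω : ℕ → Fin N => ω i) ⁻¹' ({x}ᶜ : Set (Fin N)))
    (fun i _ => ⟨({x}ᶜ : Set (Fin N)), .of_discrete, rfl⟩)]
  have hterm : ∀ i ∈ Finset.range t,
      μ ((fun ω : ℕ → Fin N => ω i) ⁻¹' ({x}ᶜ : Set (Fin N))) = 1 - (N : ℝ≥0∞)⁻¹ := by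
    intro i _
    have hc : (fun ω : ℕ → Fin N => ω i) ⁻¹' ({x}ᶜ : Set (Fin N)) = {ω | ω i = x}ᶜ := by
      ext ω; simp
    have hm : MeasurableSet {ω : ℕ → Fin N | ω i = x} := by
      show MeasurableSet ((fun ω : ℕ → Fin N => ω i) ⁻¹' {x})
      exact measurable_pi_apply i (measurableSet_singleton x)
    rw [hc, prob_compl_eq_one_sub hm, hunif]
  rw [Finset.prod_congr rfl hterm, Finset.prod_const, Finset.card_range]

lemma pcard_le_geom
    (hindep : iIndepFun (fun t (ω : ℕ → Fin N) => ω t) μ)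
    (hunif : ∀ t (x : Fin N), μ {ω | ω t = x} = ((N : ℕ) : ℝ≥0∞)⁻¹)
    (F : Finset (Fin N)) (j : ℕ) (hj : j < F.card) (t : ℕ) :
    pcard μ F t j ≤ F.card * (1 - (N : ℝ≥0∞)⁻¹) ^ t := by
  have hsub : {ω : ℕ → Fin N | (D t ω ∩ F).card = j} ⊆
      ⋃ x ∈ F, {ω : ℕ → Fin N | ∀ i < t, ω i ≠ x} := by
    intro ω hω
    have hns : ¬ F ⊆ D t ω := by
      intro hsubs
      have : D t ω ∩ F = F := Finset.inter_eq_right.2 hsubs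
      rw [Set.mem_setOf_eq, this] at hω
      omega
    obtain ⟨x, hxF, hxD⟩ := Finset.not_subset.1 hns
    refine Set.mem_biUnion hxF ?_
    intro i hi hieq
    exact hxD (Finset.mem_image.2 ⟨i, Finset.mem_range.2 hi, hieq⟩)
  calc pcard μ F t j ≤ μ (⋃ x ∈ F, {ω : ℕ → Fin N | ∀ i < t, ω i ≠ x}) :=
        measure_mono hsub
    _ ≤ ∑ x ∈ F, μ {ω : ℕ → Fin N | ∀ i < t, ω i ≠ x} := measure_biUnion_finset_le F _
    _ = ∑ _x ∈ F, (1 - (N : ℝ≥0∞)⁻¹) ^ t :=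
        Finset.sum_congr rfl fun x _ => meas_avoid hindep hunif x t
    _ = F.card * (1 - (N : ℝ≥0∞)⁻¹) ^ t := by
        rw [Finset.sum_const, nsmul_eq_mul]

end PCard

section Series

set_option linter.unusedSectionVars false

variable {N : ℕ} {μ : Measure (ℕ → Fin N)} [IsProbabilityMeasure μ]

lemma scard_ne_top (hN : 0 < N)
    (hindep : iIndepFun (fun t (ω : ℕ → Fin N) => ω t) μ)
    (hunif : ∀ t (x : Fin N), μ {ω | ω t = x} = ((N : ℕ) : ℝ≥0∞)⁻¹)
    (F : Finset (Fin N)) (j : ℕ) (hj : j < F.card) :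
    ∑' t, pcard μ F t j ≠ ⊤ := by
  have hb : ∑' t, pcard μ F t j ≤ ∑' t : ℕ, (F.card : ℝ≥0∞) * (1 - (N : ℝ≥0∞)⁻¹) ^ t :=
    ENNReal.tsum_le_tsum fun t => pcard_le_geom hindep hunif F j hj t
  rw [ENNReal.tsum_mul_left, ENNReal.tsum_geometric] at hb
  have h1 : (1 : ℝ≥0∞) - (1 - (N : ℝ≥0∞)⁻¹) = (N : ℝ≥0∞)⁻¹ :=
    ENNReal.sub_sub_cancel (by simp) (ENNReal.inv_le_one.2 (by exact_mod_cast hN))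
  rw [h1, inv_inv] at hb
  exact ne_top_of_le_ne_top (ENNReal.mul_ne_top (ENNReal.natCast_ne_top _)
    (ENNReal.natCast_ne_top _)) hb

lemma ennreal_solve {a r : ℝ≥0∞} (ha : a ≠ ⊤) {u v : ℕ} (hN : 0 < N) (huv : u + v = N)
    (h : a = r + a * ((u : ℝ≥0∞) * (N : ℝ≥0∞)⁻¹)) :
    a * ((v : ℝ≥0∞) * (N : ℝ≥0∞)⁻¹) = r := by
  have hNne : ((N : ℕ) : ℝ≥0∞) ≠ 0 := by exact_mod_cast hN.ne'
  have hsplit : a = a * ((u : ℝ≥0∞) * (N : ℝ≥0∞)⁻¹) + a * ((v : ℝ≥0∞) * (N : ℝ≥0∞)⁻¹) := by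
    rw [← mul_add, ← add_mul]
    have hcast : ((u : ℝ≥0∞) + (v : ℝ≥0∞)) = (N : ℝ≥0∞) := by exact_mod_cast congrArg Nat.cast huv
    rw [hcast, ENNReal.mul_inv_cancel hNne (ENNReal.natCast_ne_top _), mul_one]
  have hu : a * ((u : ℝ≥0∞) * (N : ℝ≥0∞)⁻¹) ≠ ⊤ :=
    ENNReal.mul_ne_top ha (ENNReal.mul_ne_top (ENNReal.natCast_ne_top _)
      (ENNReal.inv_ne_top.2 hNne))
  have h2 : a * ((u : ℝ≥0∞) * (N : ℝ≥0∞)⁻¹) + a * ((v : ℝ≥0∞) * (N : ℝ≥0∞)⁻¹)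
      = a * ((u : ℝ≥0∞) * (N : ℝ≥0∞)⁻¹) + r := by
    conv_lhs => rw [← hsplit]
    conv_lhs => rw [h]
    exact add_comm _ _
  exact ((ENNReal.add_right_inj hu).1 h2)

lemma ennreal_unsolve {a : ℝ≥0∞} {v : ℕ} (hN : 0 < N) (hv : v ≠ 0)
    (h : a * ((v : ℝ≥0∞) * (N : ℝ≥0∞)⁻¹) = 1) :
    a = (N : ℝ≥0∞) * ((v : ℕ) : ℝ≥0∞)⁻¹ := by
  have hNne : ((N : ℕ) : ℝ≥0∞) ≠ 0 := by exact_mod_cast hN.ne'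
  have hvne : ((v : ℕ) : ℝ≥0∞) ≠ 0 := by exact_mod_cast hv
  have hb0 : ((v : ℝ≥0∞) * (N : ℝ≥0∞)⁻¹) ≠ 0 := by
    simp [hvne, ENNReal.natCast_ne_top N]
  have hbt : ((v : ℝ≥0∞) * (N : ℝ≥0∞)⁻¹) ≠ ⊤ :=
    ENNReal.mul_ne_top (ENNReal.natCast_ne_top _) (ENNReal.inv_ne_top.2 hNne)
  have : a = a * (((v : ℝ≥0∞) * (N : ℝ≥0∞)⁻¹) * ((v : ℝ≥0∞) * (N : ℝ≥0∞)⁻¹)⁻¹) := by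
    rw [ENNReal.mul_inv_cancel hb0 hbt, mul_one]
  rw [this, ← mul_assoc, h, one_mul,
    ENNReal.mul_inv (Or.inl hvne) (Or.inl (ENNReal.natCast_ne_top _)), inv_inv, mul_comm]

lemma scard_eq (hN : 0 < N)
    (hindep : iIndepFun (fun t (ω : ℕ → Fin N) => ω t) μ)
    (hunif : ∀ t (x : Fin N), μ {ω | ω t = x} = ((N : ℕ) : ℝ≥0∞)⁻¹)
    (F : Finset (Fin N)) (hFN : F.card ≤ N) :
    ∀ j, j < F.card → ∑' t, pcard μ F t j = (N : ℝ≥0∞) * ((F.card - j : ℕ) : ℝ≥0∞)⁻¹ := by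
  intro j
  induction j with
  | zero =>
    intro hj
    have hrec : ∑' t, pcard μ F t 0 =
        1 + (∑' t, pcard μ F t 0) * (((N - F.card : ℕ) : ℝ≥0∞) * (N : ℝ≥0∞)⁻¹) := by
      conv_lhs => rw [tsum_eq_zero_add' ENNReal.summable]
      rw [pcard_zero_zero]
      congr 1
      simp_rw [pcard_succ_zero hN hindep hunif F]
      rw [ENNReal.tsum_mul_right]
    have hsolve := ennreal_solve (scard_ne_top hN hindep hunif F 0 hj) hN
      (u := N - F.card) (v := F.card - 0) (by omega) hrec
    exact ennreal_unsolve hN (by omega) hsolve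
  | succ j ih =>
    intro hj
    have hij := ih (by omega)
    have hone : (∑' t, pcard μ F t j) * (((F.card - j : ℕ) : ℝ≥0∞) * (N : ℝ≥0∞)⁻¹) = 1 := by
      rw [hij]
      have hNne : ((N : ℕ) : ℝ≥0∞) ≠ 0 := by exact_mod_cast hN.ne'
      have hvne : ((F.card - j : ℕ) : ℝ≥0∞) ≠ 0 := by
        have : F.card - j ≠ 0 := by omega
        exact_mod_cast this
      calc (N : ℝ≥0∞) * ((F.card - j : ℕ) : ℝ≥0∞)⁻¹ *
            (((F.card - j : ℕ) : ℝ≥0∞) * (N : ℝ≥0∞)⁻¹)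
          = ((N : ℝ≥0∞) * (N : ℝ≥0∞)⁻¹) *
            (((F.card - j : ℕ) : ℝ≥0∞)⁻¹ * ((F.card - j : ℕ) : ℝ≥0∞)) := by ring
        _ = 1 := by
            rw [ENNReal.mul_inv_cancel hNne (ENNReal.natCast_ne_top _),
              ENNReal.inv_mul_cancel hvne (ENNReal.natCast_ne_top _), mul_one]
    have hrec : ∑' t, pcard μ F t (j + 1) =
        1 + (∑' t, pcard μ F t (j + 1)) *
          (((N - (F.card - (j + 1)) : ℕ) : ℝ≥0∞) * (N : ℝ≥0∞)⁻¹) := by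
      conv_lhs => rw [tsum_eq_zero_add' ENNReal.summable]
      rw [pcard_zero_succ]
      simp_rw [pcard_succ_succ hN hindep hunif F]
      rw [ENNReal.tsum_add, ENNReal.tsum_mul_right, ENNReal.tsum_mul_right, hone, zero_add,
        add_comm]
    have hsolve := ennreal_solve (scard_ne_top hN hindep hunif F (j + 1) hj) hN
      (u := N - (F.card - (j + 1))) (v := F.card - (j + 1)) (by omega) hrec
    exact ennreal_unsolve hN (by omega) hsolve

end Series

section Final

set_option linter.unusedSectionVars false

variable {N : ℕ} {μ : Measure (ℕ → Fin N)} [IsProbabilityMeasure μ]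

lemma D_mono {s t : ℕ} (h : s ≤ t) (ω : ℕ → Fin N) : D s ω ⊆ D t ω :=
  Finset.image_subset_image (Finset.range_subset_range.2 h)

lemma measurable_rtl (k : ℕ) (F : Finset (Fin N)) :
    Measurable (recoveryTimeLocal (N := N) k F) := by
  classical
  apply measurable_to_countable'
  intro c
  match c with
  | 0 =>
    have hset : recoveryTimeLocal (N := N) k F ⁻¹' {0} =
        ⋂ t, {ω : ℕ → Fin N | ¬ (1 ≤ t ∧ k ≤ (D t ω ∩ F).card)} := by
      ext ω
      simp only [Set.mem_preimage, Set.mem_singleton_iff, recoveryTimeLocal,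
        Nat.sInf_eq_zero, Set.mem_iInter, Set.mem_setOf_eq]
      constructor
      · rintro (⟨h0, -⟩ | hemp)
        · omega
        · intro t ht
          have : t ∈ {t | 1 ≤ t ∧ k ≤ (D t ω ∩ F).card} := ht
          rw [hemp] at this
          exact this
      · intro h
        right
        ext t
        simp only [Set.mem_setOf_eq, Set.mem_empty_iff_false, iff_false]
        exact h t
    rw [hset]
    exact MeasurableSet.iInter fun t =>
      measurableSet_DProp t (fun B => ¬ (1 ≤ t ∧ k ≤ (B ∩ F).card))
  | (c + 1) =>
    have hset : recoveryTimeLocal (N := N) k F ⁻¹' {c + 1} =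
        {ω : ℕ → Fin N | k ≤ (D (c + 1) ω ∩ F).card} ∩
          ⋂ s ∈ Finset.range (c + 1), {ω : ℕ → Fin N | ¬ (1 ≤ s ∧ k ≤ (D s ω ∩ F).card)} := by
      ext ω
      simp only [Set.mem_preimage, Set.mem_singleton_iff, recoveryTimeLocal,
        Set.mem_inter_iff, Set.mem_setOf_eq, Set.mem_iInter, Finset.mem_range]
      constructor
      · intro h
        have hne : {t | 1 ≤ t ∧ k ≤ (D t ω ∩ F).card}.Nonempty := by
          by_contra hemp
          rw [Set.not_nonempty_iff_eq_empty] at hemp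
          rw [hemp, Nat.sInf_empty] at h
          omega
        have hmem := Nat.sInf_mem hne
        rw [h] at hmem
        refine ⟨hmem.2, fun s hs => ?_⟩
        intro hscont
        have := Nat.sInf_le (s := {t | 1 ≤ t ∧ k ≤ (D t ω ∩ F).card}) hscont
        omega
      · rintro ⟨h1, h2⟩
        have hmem : c + 1 ∈ {t | 1 ≤ t ∧ k ≤ (D t ω ∩ F).card} := ⟨by omega, h1⟩
        refine le_antisymm (Nat.sInf_le hmem) ?_
        have hin := Nat.sInf_mem (s := {t | 1 ≤ t ∧ k ≤ (D t ω ∩ F).card}) ⟨_, hmem⟩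
        by_contra hlt
        push_neg at hlt
        exact h2 _ hlt hin
    rw [hset]
    exact (measurableSet_DProp (c + 1) (fun B => k ≤ (B ∩ F).card)).inter
      (MeasurableSet.iInter fun s => MeasurableSet.iInter fun _ =>
        measurableSet_DProp s (fun B => ¬ (1 ≤ s ∧ k ≤ (B ∩ F).card)))

lemma bad_null (hN : 0 < N)
    (hindep : iIndepFun (fun t (ω : ℕ → Fin N) => ω t) μ)
    (hunif : ∀ t (x : Fin N), μ {ω | ω t = x} = ((N : ℕ) : ℝ≥0∞)⁻¹)
    (F : Finset (Fin N)) (k : ℕ) (hkF : k ≤ F.card) :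
    μ (⋂ t, {ω : ℕ → Fin N | (D t ω ∩ F).card < k}) = 0 := by
  have hbound : ∀ t : ℕ,
      μ (⋂ s, {ω : ℕ → Fin N | (D s ω ∩ F).card < k}) ≤
        (F.card : ℝ≥0∞) * (1 - (N : ℝ≥0∞)⁻¹) ^ t := by
    intro t
    have hsub : (⋂ s, {ω : ℕ → Fin N | (D s ω ∩ F).card < k}) ⊆
        ⋃ x ∈ F, {ω : ℕ → Fin N | ∀ i < t, ω i ≠ x} := by
      intro ω hω
      have hωt : (D t ω ∩ F).card < k := Set.mem_iInter.1 hω t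
      have hns : ¬ F ⊆ D t ω := by
        intro hsubs
        have : D t ω ∩ F = F := Finset.inter_eq_right.2 hsubs
        rw [this] at hωt
        omega
      obtain ⟨x, hxF, hxD⟩ := Finset.not_subset.1 hns
      refine Set.mem_biUnion hxF ?_
      intro i hi hieq
      exact hxD (Finset.mem_image.2 ⟨i, Finset.mem_range.2 hi, hieq⟩)
    calc μ _ ≤ μ (⋃ x ∈ F, {ω : ℕ → Fin N | ∀ i < t, ω i ≠ x}) := measure_mono hsub
      _ ≤ ∑ x ∈ F, μ {ω : ℕ → Fin N | ∀ i < t, ω i ≠ x} := measure_biUnion_finset_le F _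
      _ = ∑ _x ∈ F, (1 - (N : ℝ≥0∞)⁻¹) ^ t :=
          Finset.sum_congr rfl fun x _ => meas_avoid hindep hunif x t
      _ = F.card * (1 - (N : ℝ≥0∞)⁻¹) ^ t := by rw [Finset.sum_const, nsmul_eq_mul]
  have hr : (1 : ℝ≥0∞) - (N : ℝ≥0∞)⁻¹ < 1 := by
    apply ENNReal.sub_lt_self ENNReal.one_ne_top one_ne_zero
    simp [ENNReal.natCast_ne_top N]
  have htend : Filter.Tendsto (fun t : ℕ => (F.card : ℝ≥0∞) * (1 - (N : ℝ≥0∞)⁻¹) ^ t)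
      Filter.atTop (nhds 0) := by
    have h1 := ENNReal.tendsto_pow_atTop_nhds_zero_of_lt_one hr
    have h2 := ENNReal.Tendsto.const_mul (a := (F.card : ℝ≥0∞)) h1
      (Or.inr (ENNReal.natCast_ne_top _))
    simpa using h2
  have hle : μ (⋂ t, {ω : ℕ → Fin N | (D t ω ∩ F).card < k}) ≤ 0 :=
    ge_of_tendsto htend (Filter.Eventually.of_forall hbound)
  exact le_antisymm hle zero_le

lemma meas_tail (hN : 0 < N)
    (hindep : iIndepFun (fun t (ω : ℕ → Fin N) => ω t) μ)
    (hunif : ∀ t (x : Fin N), μ {ω | ω t = x} = ((N : ℕ) : ℝ≥0∞)⁻¹)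
    (F : Finset (Fin N)) (k : ℕ) (hk1 : 1 ≤ k) (hkF : k ≤ F.card) (t : ℕ) :
    μ {ω : ℕ → Fin N | t < recoveryTimeLocal k F ω} =
      μ {ω : ℕ → Fin N | (D t ω ∩ F).card < k} := by
  set Bad := ⋂ s, {ω : ℕ → Fin N | (D s ω ∩ F).card < k} with hBad
  have hsub1 : {ω : ℕ → Fin N | t < recoveryTimeLocal k F ω} ⊆
      {ω : ℕ → Fin N | (D t ω ∩ F).card < k} := by
    intro ω hω
    simp only [Set.mem_setOf_eq] at hω ⊢
    by_contra hc
    push_neg at hc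
    have ht1 : 1 ≤ t := by
      by_contra ht0
      have : t = 0 := by omega
      subst this
      simp [D] at hc
      omega
    have : recoveryTimeLocal k F ω ≤ t := Nat.sInf_le ⟨ht1, hc⟩
    omega
  have hsub2 : {ω : ℕ → Fin N | (D t ω ∩ F).card < k} ⊆
      {ω : ℕ → Fin N | t < recoveryTimeLocal k F ω} ∪ Bad := by
    intro ω hω
    by_cases hB : ω ∈ Bad
    · exact Or.inr hB
    · left
      rw [hBad, Set.mem_iInter] at hB
      push_neg at hB
      obtain ⟨s, hs⟩ := hB
      rw [Set.mem_setOf_eq, not_lt] at hs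
      have hs1 : 1 ≤ s := by
        by_contra hs0
        have : s = 0 := by omega
        subst this
        simp [D] at hs
        omega
      have hne : {u | 1 ≤ u ∧ k ≤ (D u ω ∩ F).card}.Nonempty := ⟨s, hs1, hs⟩
      have hmem := Nat.sInf_mem hne
      rw [Set.mem_setOf_eq]
      by_contra hc
      push_neg at hc
      have hsub3 : (D (recoveryTimeLocal k F ω) ω ∩ F) ⊆ (D t ω ∩ F) :=
        Finset.inter_subset_inter (D_mono hc ω) (Finset.Subset.refl F)
      have := Finset.card_le_card hsub3
      rw [Set.mem_setOf_eq] at hω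
      have hkcard := hmem.2
      simp only [recoveryTimeLocal] at hkcard this
      omega
  refine le_antisymm (measure_mono hsub1) ?_
  calc μ {ω : ℕ → Fin N | (D t ω ∩ F).card < k}
      ≤ μ ({ω : ℕ → Fin N | t < recoveryTimeLocal k F ω} ∪ Bad) := measure_mono hsub2
    _ ≤ μ {ω : ℕ → Fin N | t < recoveryTimeLocal k F ω} + μ Bad := measure_union_le _ _
    _ = μ {ω : ℕ → Fin N | t < recoveryTimeLocal k F ω} := by
        rw [hBad, bad_null hN hindep hunif F k hkF, add_zero]

lemma natCast_eq_tsum (c : ℕ) :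
    (c : ℝ≥0∞) = ∑' t : ℕ, if t < c then 1 else 0 := by
  have h1 : ∑ t ∈ Finset.range c, (if t < c then (1 : ℝ≥0∞) else 0) = c := by
    rw [Finset.sum_congr rfl fun t ht => if_pos (Finset.mem_range.1 ht),
      Finset.sum_const, Finset.card_range, nsmul_eq_mul, mul_one]
  rw [tsum_eq_sum (s := Finset.range c)
    (fun t ht => if_neg fun hc => ht (Finset.mem_range.2 hc)), h1]

lemma lintegral_rtl (k : ℕ) (F : Finset (Fin N)) :
    ∫⁻ ω, (recoveryTimeLocal k F ω : ℝ≥0∞) ∂μ =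
      ∑' t : ℕ, μ {ω : ℕ → Fin N | t < recoveryTimeLocal k F ω} := by
  have hms : ∀ t : ℕ, MeasurableSet {ω : ℕ → Fin N | t < recoveryTimeLocal k F ω} := by
    intro t
    exact measurable_rtl k F (MeasurableSet.of_discrete (s := {x : ℕ | t < x}))
  have hfun : ∀ ω : ℕ → Fin N, ((recoveryTimeLocal k F ω : ℕ) : ℝ≥0∞) =
      ∑' t : ℕ, Set.indicator {ω' : ℕ → Fin N | t < recoveryTimeLocal k F ω'}
        (fun _ => (1 : ℝ≥0∞)) ω := by
    intro ω
    rw [natCast_eq_tsum]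
    refine tsum_congr fun t => ?_
    rw [Set.indicator_apply]
    simp only [Set.mem_setOf_eq]
  calc ∫⁻ ω, (recoveryTimeLocal k F ω : ℝ≥0∞) ∂μ
      = ∫⁻ ω, ∑' t : ℕ, Set.indicator {ω' : ℕ → Fin N | t < recoveryTimeLocal k F ω'}
          (fun _ => (1 : ℝ≥0∞)) ω ∂μ := lintegral_congr hfun
    _ = ∑' t : ℕ, ∫⁻ ω, Set.indicator {ω' : ℕ → Fin N | t < recoveryTimeLocal k F ω'}
          (fun _ => (1 : ℝ≥0∞)) ω ∂μ :=
        lintegral_tsum fun t => ((measurable_const.indicator (hms t)).aemeasurable)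
    _ = ∑' t : ℕ, μ {ω : ℕ → Fin N | t < recoveryTimeLocal k F ω} := by
        refine tsum_congr fun t => ?_
        exact lintegral_indicator_one (hms t)

end Final

theorem stmt_1 (m n k : ℕ) (hm : 1 ≤ m) (hk : 1 ≤ k) (hkn : k ≤ n)
    (μ : Measure (ℕ → Fin (m * n))) [IsProbabilityMeasure μ]
    (hindep : iIndepFun (fun t (ω : ℕ → Fin (m * n)) => ω t) μ)
    (hunif : ∀ t (x : Fin (m * n)), μ {ω | ω t = x} = ((m * n : ℕ) : ℝ≥0∞)⁻¹)
    (F : Finset (Fin (m * n))) (hF : F.card = n) :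
    Integrable (fun ω => (recoveryTimeLocal k F ω : ℝ)) μ ∧
      ∫ ω, (recoveryTimeLocal k F ω : ℝ) ∂μ = m * n * (H n - H (n - k)) := by
  classical
  have hN : 0 < m * n := Nat.mul_pos hm (lt_of_lt_of_le hk hkn)
  have hFN : F.card ≤ m * n := by
    rw [hF]
    calc n = 1 * n := (one_mul n).symm
      _ ≤ m * n := Nat.mul_le_mul_right n hm
  have hkF : k ≤ F.card := by rw [hF]; exact hkn
  have hmeasL : ∀ t, μ {ω : ℕ → Fin (m * n) | (D t ω ∩ F).card < k} =
      ∑ j ∈ Finset.range k, pcard μ F t j := by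
    intro t
    have hset : {ω : ℕ → Fin (m * n) | (D t ω ∩ F).card < k} =
        ⋃ j ∈ Finset.range k, {ω : ℕ → Fin (m * n) | (D t ω ∩ F).card = j} := by
      ext ω; simp
    rw [hset, measure_biUnion_finset]
    · rfl
    · intro a _ b _ hab
      apply Set.disjoint_left.2
      intro ω ha hb
      exact hab (ha.symm.trans hb)
    · intro j _
      exact measurableSet_DProp t (fun B => (B ∩ F).card = j)
  have hL : ∫⁻ ω, (recoveryTimeLocal k F ω : ℝ≥0∞) ∂μ =
      ∑ j ∈ Finset.range k, ((m * n : ℕ) : ℝ≥0∞) * ((n - j : ℕ) : ℝ≥0∞)⁻¹ := by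
    rw [lintegral_rtl]
    calc ∑' t : ℕ, μ {ω : ℕ → Fin (m * n) | t < recoveryTimeLocal k F ω}
        = ∑' t : ℕ, μ {ω : ℕ → Fin (m * n) | (D t ω ∩ F).card < k} :=
          tsum_congr fun t => meas_tail hN hindep hunif F k hk hkF t
      _ = ∑' t : ℕ, ∑ j ∈ Finset.range k, pcard μ F t j := tsum_congr hmeasL
      _ = ∑ j ∈ Finset.range k, ∑' t : ℕ, pcard μ F t j :=
          Summable.tsum_finsetSum fun j _ => ENNReal.summable
      _ = ∑ j ∈ Finset.range k, ((m * n : ℕ) : ℝ≥0∞) * ((F.card - j : ℕ) : ℝ≥0∞)⁻¹ :=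
          Finset.sum_congr rfl fun j hj => scard_eq hN hindep hunif F hFN j
            (lt_of_lt_of_le (Finset.mem_range.1 hj) hkF)
      _ = ∑ j ∈ Finset.range k, ((m * n : ℕ) : ℝ≥0∞) * ((n - j : ℕ) : ℝ≥0∞)⁻¹ := by
          rw [hF]
  have hterm_ne_top : ∀ j ∈ Finset.range k,
      ((m * n : ℕ) : ℝ≥0∞) * ((n - j : ℕ) : ℝ≥0∞)⁻¹ ≠ ⊤ := by
    intro j hj
    have hj' := Finset.mem_range.1 hj
    have hnj : n - j ≠ 0 := by omega
    exact ENNReal.mul_ne_top (ENNReal.natCast_ne_top _)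
      (ENNReal.inv_ne_top.2 (by exact_mod_cast hnj))
  have hLfin : (∑ j ∈ Finset.range k, ((m * n : ℕ) : ℝ≥0∞) * ((n - j : ℕ) : ℝ≥0∞)⁻¹) ≠ ⊤ :=
    (ENNReal.sum_lt_top.2 fun j hj => (hterm_ne_top j hj).lt_top).ne
  have hmReal : Measurable (fun ω : ℕ → Fin (m * n) => (recoveryTimeLocal k F ω : ℝ)) :=
    measurable_from_top.comp (measurable_rtl k F)
  have hInt : Integrable (fun ω : ℕ → Fin (m * n) => (recoveryTimeLocal k F ω : ℝ)) μ := by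
    refine ⟨hmReal.aestronglyMeasurable, ?_⟩
    show (∫⁻ ω, (‖(recoveryTimeLocal k F ω : ℝ)‖₊ : ℝ≥0∞) ∂μ) < ⊤
    have hnrm : ∀ ω : ℕ → Fin (m * n),
        ((‖(recoveryTimeLocal k F ω : ℝ)‖₊ : ℝ≥0∞)) = (recoveryTimeLocal k F ω : ℝ≥0∞) := by
      intro ω
      simp
    rw [lintegral_congr hnrm, hL]
    exact hLfin.lt_top
  refine ⟨hInt, ?_⟩
  rw [integral_eq_lintegral_of_nonneg_ae
    (Filter.Eventually.of_forall fun ω => by positivity) hmReal.aestronglyMeasurable]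
  have hofReal : ∀ ω : ℕ → Fin (m * n),
      ENNReal.ofReal ((recoveryTimeLocal k F ω : ℝ)) = (recoveryTimeLocal k F ω : ℝ≥0∞) :=
    fun ω => ENNReal.ofReal_natCast _
  rw [lintegral_congr hofReal, hL, ENNReal.toReal_sum hterm_ne_top]
  have htermReal : ∀ j ∈ Finset.range k,
      (((m * n : ℕ) : ℝ≥0∞) * ((n - j : ℕ) : ℝ≥0∞)⁻¹).toReal =
        ((m * n : ℕ) : ℝ) * (((n - j : ℕ) : ℝ))⁻¹ := by
    intro j hj
    rw [ENNReal.toReal_mul, ENNReal.toReal_inv, ENNReal.toReal_natCast, ENNReal.toReal_natCast]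
  rw [Finset.sum_congr rfl htermReal, ← Finset.mul_sum]
  have hH : H n - H (n - k) = ∑ j ∈ Finset.range k, (((n - j : ℕ) : ℝ))⁻¹ := by
    have hsub : Finset.range (n - k) ⊆ Finset.range n := Finset.range_subset_range.2 (by omega)
    have hsdiff := Finset.sum_sdiff (f := fun i : ℕ => (1 : ℝ) / (i + 1)) hsub
    have h2 : H n - H (n - k) = ∑ i ∈ Finset.range n \ Finset.range (n - k),
        (1 : ℝ) / (i + 1) := by
      rw [H, H]
      linarith
    have h3 : Finset.range n \ Finset.range (n - k) = Finset.Ico (n - k) n := by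
      ext i
      simp only [Finset.mem_sdiff, Finset.mem_range, Finset.mem_Ico]
      omega
    rw [h2, h3, Finset.sum_Ico_eq_sum_range]
    have h4 : n - (n - k) = k := by omega
    rw [h4, ← Finset.sum_range_reflect (fun j => (((n - j : ℕ) : ℝ))⁻¹) k]
    refine Finset.sum_congr rfl fun j hj => ?_
    have hj' := Finset.mem_range.1 hj
    have h5 : n - (k - 1 - j) = n - k + j + 1 := by omega
    rw [h5, one_div]
    congr 1
    push_cast
    ring
  rw [hH]
  push_cast
  ring
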